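/- Let X be a Banach space with topological decompositions X = U₀ ⊕ U₁ = V₀ ⊕ V₁. If V₀ is commensurate with U₀ and V₁ is commensurate with U₁, then the projection π_{V₀,V₁} onto V₀ along V₁ is commensurate with the projection π_{U₀,U₁} onto U₀ along U₁, i.e., their difference is a compact operator. -/

import Mathlib

/-!
Statement 5 (Lemma `LemmaFredDecomp`(ii)):
Let `X = U₀ ⊕ U₁ = V₀ ⊕ V₁` be topological decompositions of a Banach space, realized by
continuous idempotents `p = π_{U₀,U₁}` and `q = π_{V₀,V₁}`.  If `V₀` is commensurate with
`U₀` and `V₁` is commensurate with `U₁`, then `π_{V₀,V₁}` is commensurate with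
`π_{U₀,U₁}`, i.e. `q − p` is a compact operator.
-/

/-- The restriction of `q` to `S`, viewed as a map into `LinearMap.range q`, is Fredholm. -/
def IsFredholmRestriction {X : Type*} [NormedAddCommGroup X] [NormedSpace ℝ X]
    (q : X →L[ℝ] X) (S : Submodule ℝ X) : Prop :=
  FiniteDimensional ℝ ↥(S ⊓ LinearMap.ker (q : X →ₗ[ℝ] X)) ∧
    IsClosed ((S.map (q : X →ₗ[ℝ] X) : Submodule ℝ X) : Set X) ∧
    FiniteDimensional ℝ
      (↥(LinearMap.range (q : X →ₗ[ℝ] X)) ⧸ (S.map (q : X →ₗ[ℝ] X)).comap (LinearMap.range (q : X →ₗ[ℝ] X)).subtype)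

/-- `S` is commensurate with the range of the continuous idempotent `q`. -/
def Commensurate {X : Type*} [NormedAddCommGroup X] [NormedSpace ℝ X]
    (q : X →L[ℝ] X) (S : Submodule ℝ X) : Prop :=
  IsFredholmRestriction q S ∧
    IsCompactOperator ((ContinuousLinearMap.id ℝ X - q).comp S.subtypeL)

theorem commensurate_projections_of_commensurate_subspaces
    {X : Type*} [NormedAddCommGroup X] [NormedSpace ℝ X] [CompleteSpace X]
    (U₀ U₁ V₀ V₁ : Submodule ℝ X)
    -- `X = U₀ ⊕ U₁` via the projection `p = π_{U₀,U₁}`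
    (p : X →L[ℝ] X) (hp : IsIdempotentElem p)
    (hpr : LinearMap.range (p : X →ₗ[ℝ] X) = U₀) (hpk : LinearMap.ker (p : X →ₗ[ℝ] X) = U₁)
    -- `X = V₀ ⊕ V₁` via the projection `q = π_{V₀,V₁}`
    (q : X →L[ℝ] X) (hq : IsIdempotentElem q)
    (hqr : LinearMap.range (q : X →ₗ[ℝ] X) = V₀) (hqk : LinearMap.ker (q : X →ₗ[ℝ] X) = V₁)
    -- `V₀` commensurate with `U₀`, `V₁` commensurate with `U₁`
    (h₀ : Commensurate p V₀)
    (h₁ : Commensurate (ContinuousLinearMap.id ℝ X - p) V₁) :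
    IsCompactOperator (q - p) := by
  have hqmem : ∀ x, q x ∈ V₀ := fun x => hqr ▸ LinearMap.mem_range_self (q : X →ₗ[ℝ] X) x
  have hqmem' : ∀ x, (ContinuousLinearMap.id ℝ X - q) x ∈ V₁ := by
    intro x
    rw [← hqk, LinearMap.mem_ker]
    have := congrArg (fun f : X →L[ℝ] X => f x) hq
    simp only [ContinuousLinearMap.mul_apply] at this
    simp [this]
  -- (1-p) ∘ q is compact
  have h1 : IsCompactOperator ((ContinuousLinearMap.id ℝ X - p).comp q) := by
    have : (ContinuousLinearMap.id ℝ X - p).comp q =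
        ((ContinuousLinearMap.id ℝ X - p).comp V₀.subtypeL).comp
          (q.codRestrict V₀ hqmem) := by
      ext x; simp
    rw [this]
    exact h₀.2.comp_clm _
  -- p ∘ (1-q) is compact
  have h2 : IsCompactOperator (p.comp (ContinuousLinearMap.id ℝ X - q)) := by
    have hpp : ContinuousLinearMap.id ℝ X - (ContinuousLinearMap.id ℝ X - p) = p := by
      ext x; simp
    have : p.comp (ContinuousLinearMap.id ℝ X - q) =
        ((ContinuousLinearMap.id ℝ X - (ContinuousLinearMap.id ℝ X - p)).comp
          V₁.subtypeL).comp ((ContinuousLinearMap.id ℝ X - q).codRestrict V₁ hqmem') := by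
      rw [hpp]; ext x; simp
    rw [this]
    exact h₁.2.comp_clm _
  have key : (q - p : X →L[ℝ] X) =
      (ContinuousLinearMap.id ℝ X - p).comp q - p.comp (ContinuousLinearMap.id ℝ X - q) := by
    ext x; simp
  rw [key]
  exact h1.sub h2
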